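/- (Theorem 1, case 3.) Suppose i < u, j < u, i > l + D, and i ≥ u − B (i.e., i ≥ max(D + l + 1, u − B): the upper bound u is reachable but the lower bound l is not). Then the cardinality of 𝕊_{ij}^B(l,u) equals C(K, B) − C(K, B_u), where B_u = B − j + u. -/

import Mathlib

/-- An integer grid bridge from `i` to `j` with `B` upward jumps and `D` downward
jumps. -/
def IsBridge (i j : ℤ) (B D : ℕ) (ω : Fin (B + D + 1) → ℤ) : Prop :=
  ω 0 = i ∧ ω (Fin.last (B + D)) = j ∧
    (∀ k : Fin (B + D), |ω k.succ - ω k.castSucc| = 1) ∧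
    (Finset.univ.filter (fun k : Fin (B + D) => ω k.succ = ω k.castSucc + 1)).card = B

/-- `𝕊_{ij}^B(l,u)`: bridges staying strictly between `l` and `u`. -/
def BoundedBridges (i j l u : ℤ) (B D : ℕ) : Set (Fin (B + D + 1) → ℤ) :=
  {ω | IsBridge i j B D ω ∧ ∀ k : Fin (B + D + 1), l < ω k ∧ ω k < u}

open Finset

namespace BridgeCount

variable {K : ℕ}

def fcnt (S : Finset (Fin K)) (m : ℕ) : ℕ := (S.filter fun k : Fin K => (k:ℕ) < m).card

def pval (i : ℤ) (S : Finset (Fin K)) (m : ℕ) : ℤ := i + 2 * fcnt S m - m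

lemma fcnt_zero (S : Finset (Fin K)) : fcnt S 0 = 0 := by simp [fcnt]

lemma fcnt_top (S : Finset (Fin K)) : fcnt S K = S.card := by
  unfold fcnt
  rw [filter_true_of_mem fun k _ => k.isLt]

lemma fcnt_succ (S : Finset (Fin K)) {m : ℕ} (h : m < K) :
    fcnt S (m+1) = fcnt S m + if (⟨m, h⟩ : Fin K) ∈ S then 1 else 0 := by
  unfold fcnt
  have hsplit : (S.filter fun k : Fin K => (k:ℕ) < m + 1)
      = (S.filter fun k : Fin K => (k:ℕ) < m) ∪ S.filter (fun k : Fin K => k = ⟨m,h⟩) := by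
    rw [← filter_or]
    apply filter_congr
    intro k _
    constructor
    · intro hk
      rcases Nat.lt_succ_iff_lt_or_eq.1 hk with h1 | h1
      · exact Or.inl h1
      · exact Or.inr (Fin.ext h1)
    · rintro (h1 | h1)
      · omega
      · simp [h1]
  rw [hsplit, card_union_of_disjoint, Finset.filter_eq']
  · split <;> simp
  · rw [Finset.disjoint_left]
    rintro k hk hk'
    simp only [mem_filter] at hk hk'
    rw [hk'.2] at hk
    simp only [mem_filter] at hk
    omega

lemma pval_zero (i : ℤ) (S : Finset (Fin K)) : pval i S 0 = i := by
  simp [pval, fcnt_zero]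

lemma pval_succ (i : ℤ) (S : Finset (Fin K)) {m : ℕ} (h : m < K) :
    pval i S (m+1) = pval i S m + if (⟨m, h⟩ : Fin K) ∈ S then 1 else -1 := by
  unfold pval
  rw [fcnt_succ S h]
  split <;> push_cast <;> ring

lemma pval_top (i : ℤ) (S : Finset (Fin K)) : pval i S K = i + 2 * S.card - K := by
  rw [pval, fcnt_top]

lemma pval_succ_le (i : ℤ) (S : Finset (Fin K)) {m : ℕ} (h : m < K) :
    pval i S (m+1) ≤ pval i S m + 1 := by
  rw [pval_succ i S h]; split <;> omega

lemma pval_succ_ge (i : ℤ) (S : Finset (Fin K)) {m : ℕ} (h : m < K) :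
    pval i S m - 1 ≤ pval i S (m+1) := by
  rw [pval_succ i S h]; split <;> omega

lemma fcnt_univ (m : ℕ) (hm : m ≤ K) : fcnt (univ : Finset (Fin K)) m = m := by
  induction m with
  | zero => exact fcnt_zero _
  | succ n ih =>
    rw [fcnt_succ _ (by omega), ih (by omega)]
    simp

lemma le_fcnt_add (S : Finset (Fin K)) (m : ℕ) (hm : m ≤ K) :
    m ≤ fcnt S m + (K - S.card) := by
  have h1 : fcnt (univ : Finset (Fin K)) m = m := fcnt_univ m hm
  have h2 : (univ : Finset (Fin K)).filter (fun k : Fin K => (k:ℕ) < m)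
      = S.filter (fun k : Fin K => (k:ℕ) < m) ∪ (univ \ S).filter (fun k : Fin K => (k:ℕ) < m) := by
    rw [← filter_union, union_sdiff_of_subset (subset_univ S)]
  have h3 : ((univ \ S).filter (fun k : Fin K => (k:ℕ) < m)).card ≤ K - S.card := by
    calc ((univ \ S).filter (fun k : Fin K => (k:ℕ) < m)).card ≤ (univ \ S).card :=
          card_filter_le _ _
      _ = K - S.card := by rw [card_sdiff_of_subset (subset_univ S)]; simp
  have h4 : m ≤ fcnt S m + ((univ \ S).filter (fun k : Fin K => (k:ℕ) < m)).card := by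
    calc m = fcnt (univ : Finset (Fin K)) m := h1.symm
      _ = ((univ : Finset (Fin K)).filter (fun k : Fin K => (k:ℕ) < m)).card := rfl
      _ = (S.filter (fun k : Fin K => (k:ℕ) < m) ∪ (univ \ S).filter (fun k : Fin K => (k:ℕ) < m)).card := by rw [h2]
      _ ≤ _ := card_union_le _ _
  omega

def flip (S : Finset (Fin K)) (n : ℕ) : Finset (Fin K) :=
  symmDiff S ((univ : Finset (Fin K)).filter fun k : Fin K => (k:ℕ) < n)

lemma mem_flip {S : Finset (Fin K)} {n : ℕ} {k : Fin K} :
    k ∈ flip S n ↔ ((k:ℕ) < n ∧ k ∉ S) ∨ (¬ (k:ℕ) < n ∧ k ∈ S) := by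
  simp only [flip, Finset.mem_symmDiff, mem_filter, mem_univ, true_and]
  tauto

lemma flip_flip (S : Finset (Fin K)) (n : ℕ) : flip (flip S n) n = S := by
  unfold flip
  exact symmDiff_symmDiff_cancel_right _ _

lemma pval_flip_le (i : ℤ) (S : Finset (Fin K)) {n m : ℕ} (hn : n ≤ K) (hm : m ≤ n) :
    pval i (flip S n) m = 2 * i - pval i S m := by
  induction m with
  | zero => rw [pval_zero, pval_zero]; ring
  | succ p ih =>
    have hp : p < K := by omega
    rw [pval_succ i _ hp, pval_succ i S hp, ih (by omega)]
    have hmem : (⟨p, hp⟩ : Fin K) ∈ flip S n ↔ (⟨p, hp⟩ : Fin K) ∉ S := by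
      rw [mem_flip]
      simp only [show (((⟨p, hp⟩ : Fin K)):ℕ) < n from by simpa using by omega, true_and]
      tauto
    by_cases hS : (⟨p, hp⟩ : Fin K) ∈ S
    · rw [if_pos hS, if_neg (by rw [hmem]; simp [hS])]; ring
    · rw [if_neg hS, if_pos (hmem.2 hS)]; ring

lemma pval_flip_ge (i : ℤ) (S : Finset (Fin K)) {n m : ℕ} (hn : n ≤ m) (hm : m ≤ K) :
    pval i (flip S n) m = pval i S m + 2 * (i - pval i S n) := by
  induction m, hn using Nat.le_induction with
  | base =>
    rw [pval_flip_le i S (by omega) le_rfl]; ring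
  | succ p hp ih =>
    have hpK : p < K := by omega
    rw [pval_succ i _ hpK, pval_succ i S hpK, ih (by omega)]
    have hmem : (⟨p, hpK⟩ : Fin K) ∈ flip S n ↔ (⟨p, hpK⟩ : Fin K) ∈ S := by
      rw [mem_flip]
      have : ¬ (((⟨p, hpK⟩ : Fin K)):ℕ) < n := by simp; omega
      simp [this]
    by_cases hS : (⟨p, hpK⟩ : Fin K) ∈ S
    · rw [if_pos hS, if_pos (hmem.2 hS)]; ring
    · rw [if_neg hS, if_neg (by rw [hmem]; exact hS)]; ring

lemma card_flip (i : ℤ) (S : Finset (Fin K)) {n : ℕ} (hn : n ≤ K) :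
    ((flip S n).card : ℤ) = S.card + (i - pval i S n) := by
  have h := pval_flip_ge i S hn le_rfl
  rw [pval_top, pval_top] at h
  linarith

/-- First hit from below of level `u`. -/
lemma first_hit_up (i u : ℤ) (S : Finset (Fin K)) (hiu : i < u)
    (h : ∃ m, m ≤ K ∧ u ≤ pval i S m) :
    Nat.find h ≤ K ∧ pval i S (Nat.find h) = u ∧
      ∀ m < Nat.find h, pval i S m < u := by
  obtain ⟨hle, hval⟩ := Nat.find_spec h
  have hmin : ∀ m < Nat.find h, pval i S m < u := by
    intro m hm
    have := Nat.find_min h hm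
    push_neg at this
    exact this (by omega)
  refine ⟨hle, ?_, hmin⟩
  have hpos : 0 < Nat.find h := by
    rcases Nat.eq_zero_or_pos (Nat.find h) with h0 | h0
    · exfalso; rw [h0, pval_zero] at hval; omega
    · exact h0
  have hprev : pval i S (Nat.find h - 1) < u := hmin _ (by omega)
  have hstep : pval i S (Nat.find h) ≤ pval i S (Nat.find h - 1) + 1 := by
    have : Nat.find h - 1 < K := by omega
    have := pval_succ_le i S this
    have he : Nat.find h - 1 + 1 = Nat.find h := by omega
    rwa [he] at this
  omega

/-- First hit from above of level `t`. -/
lemma first_hit_down (i t : ℤ) (S : Finset (Fin K)) (hit : t < i)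
    (h : ∃ m, m ≤ K ∧ pval i S m ≤ t) :
    Nat.find h ≤ K ∧ pval i S (Nat.find h) = t ∧
      ∀ m < Nat.find h, t < pval i S m := by
  obtain ⟨hle, hval⟩ := Nat.find_spec h
  have hmin : ∀ m < Nat.find h, t < pval i S m := by
    intro m hm
    have := Nat.find_min h hm
    push_neg at this
    exact this (by omega)
  refine ⟨hle, ?_, hmin⟩
  have hpos : 0 < Nat.find h := by
    rcases Nat.eq_zero_or_pos (Nat.find h) with h0 | h0
    · exfalso; rw [h0, pval_zero] at hval; omega
    · exact h0
  have hprev : t < pval i S (Nat.find h - 1) := hmin _ (by omega)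
  have hstep : pval i S (Nat.find h - 1) - 1 ≤ pval i S (Nat.find h) := by
    have : Nat.find h - 1 < K := by omega
    have := pval_succ_ge i S this
    have he : Nat.find h - 1 + 1 = Nat.find h := by omega
    rwa [he] at this
  omega

section Bridge

variable (i j : ℤ) (B D : ℕ)

def upSet (ω : Fin (B + D + 1) → ℤ) : Finset (Fin (B + D)) :=
  Finset.univ.filter fun k : Fin (B + D) => ω k.succ = ω k.castSucc + 1

lemma bridge_eq_pval {ω : Fin (B + D + 1) → ℤ} (hω : IsBridge i j B D ω)
    (m : ℕ) (hm : m ≤ B + D) :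
    ω ⟨m, by omega⟩ = pval i (upSet B D ω) m := by
  induction m with
  | zero =>
    rw [pval_zero]
    exact hω.1
  | succ p ih =>
    have hp : p < B + D := by omega
    rw [pval_succ i _ hp, ← ih (by omega)]
    set k : Fin (B + D) := ⟨p, hp⟩ with hk
    have hsucc : k.succ = (⟨p + 1, by omega⟩ : Fin (B + D + 1)) := rfl
    have hcast : k.castSucc = (⟨p, by omega⟩ : Fin (B + D + 1)) := rfl
    by_cases hmem : ω k.succ = ω k.castSucc + 1
    · have : k ∈ upSet B D ω := by simp [upSet, hmem]
      rw [if_pos this, ← hsucc, ← hcast, hmem]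
    · have hnot : k ∉ upSet B D ω := by simp [upSet, hmem]
      rw [if_neg hnot, ← hsucc, ← hcast]
      have habs := hω.2.2.1 k
      rcases abs_eq (by norm_num : (0:ℤ) ≤ 1) |>.1 habs with h1 | h1
      · exact absurd (by linarith) hmem
      · linarith

lemma card_upSet {ω : Fin (B + D + 1) → ℤ} (hω : IsBridge i j B D ω) :
    (upSet B D ω).card = B := hω.2.2.2

def toFun (S : Finset (Fin (B + D))) : Fin (B + D + 1) → ℤ :=
  fun m => pval i S m.val

lemma isBridge_toFun (hj : j = i + B - D) (S : Finset (Fin (B + D)))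
    (hcard : S.card = B) : IsBridge i j B D (toFun i B D S) := by
  refine ⟨?_, ?_, ?_, ?_⟩
  · show pval i S ((0 : Fin (B + D + 1)) : ℕ) = i
    rw [Fin.val_zero, pval_zero]
  · show pval i S ((Fin.last (B + D) : Fin (B + D + 1)) : ℕ) = j
    rw [Fin.val_last, pval_top, hcard, hj]
    push_cast
    ring
  · intro k
    show |pval i S (k.succ : ℕ) - pval i S (k.castSucc : ℕ)| = 1
    rw [Fin.val_succ, Fin.coe_castSucc, pval_succ i S k.isLt]
    split <;> simp
  · have : (Finset.univ.filter fun k : Fin (B + D) =>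
        toFun i B D S k.succ = toFun i B D S k.castSucc + 1) = S := by
      ext k
      rw [Finset.mem_filter]
      simp only [mem_filter, mem_univ, true_and, toFun, Fin.val_succ, Fin.coe_castSucc]
      rw [pval_succ i S k.isLt]
      constructor
      · intro hk
        by_contra hn
        rw [if_neg hn] at hk
        omega
      · intro hk
        rw [if_pos (by simpa using hk)]
    rw [this, hcard]

lemma toFun_eq_of_bridge {ω : Fin (B + D + 1) → ℤ} (hω : IsBridge i j B D ω) :
    ω = toFun i B D (upSet B D ω) := by
  funext m
  have := bridge_eq_pval i j B D hω m.val (by omega)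
  rw [Fin.eta] at this
  exact this

lemma toFun_injective : Function.Injective (toFun i B D) := by
  intro S T h
  ext k
  have h1 := congrFun h ⟨k.val + 1, by omega⟩
  have h2 := congrFun h ⟨k.val, by omega⟩
  simp only [toFun] at h1 h2
  rw [pval_succ i S k.isLt, pval_succ i T k.isLt, h2] at h1
  by_cases hS : k ∈ S <;> by_cases hT : k ∈ T <;>
    simp [hS, hT, Fin.eta] at h1 ⊢ <;> omega

end Bridge

lemma card_bad (i u : ℤ) (B D : ℕ) (c : ℕ) (hiu : i < u)
    (hcz : (c : ℤ) = (B : ℤ) + i - u) (hjle : i + (B : ℤ) - D ≤ u) :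
    ((Finset.powersetCard B (Finset.univ : Finset (Fin (B + D)))).filter
      (fun S => ¬ ∀ m ≤ B + D, pval i S m < u)).card
      = (Finset.powersetCard c (Finset.univ : Finset (Fin (B + D)))).card := by
  classical
  have exU : ∀ S ∈ (Finset.powersetCard B (Finset.univ : Finset (Fin (B + D)))).filter
      (fun S => ¬ ∀ m ≤ B + D, pval i S m < u),
      ∃ m, m ≤ B + D ∧ u ≤ pval i S m := by
    intro S hS
    have h2 := (Finset.mem_filter.1 hS).2
    push_neg at h2
    obtain ⟨m, hm1, hm2⟩ := h2
    exact ⟨m, hm1, hm2⟩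
  have exD : ∀ T ∈ Finset.powersetCard c (Finset.univ : Finset (Fin (B + D))),
      ∃ m, m ≤ B + D ∧ pval i T m ≤ 2 * i - u := by
    intro T hT
    have hT' := Finset.mem_powersetCard_univ.1 hT
    refine ⟨B + D, le_rfl, ?_⟩
    rw [pval_top, hT']
    push_cast
    omega
  refine Finset.card_bij' (fun S hS => flip S (Nat.find (exU S hS)))
    (fun T hT => flip T (Nat.find (exD T hT))) ?_ ?_ ?_ ?_
  · intro S hS
    beta_reduce
    obtain ⟨hn1, hn2, hn3⟩ := first_hit_up i u S hiu (exU S hS)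
    rw [Finset.mem_powersetCard_univ]
    have hcf := card_flip i S hn1
    rw [hn2] at hcf
    have hScard : S.card = B :=
      Finset.mem_powersetCard_univ.1 (Finset.mem_filter.1 hS).1
    rw [hScard] at hcf
    omega
  · intro T hT
    beta_reduce
    obtain ⟨hn1, hn2, hn3⟩ := first_hit_down i (2 * i - u) T (by omega) (exD T hT)
    have hTcard : T.card = c := Finset.mem_powersetCard_univ.1 hT
    rw [Finset.mem_filter, Finset.mem_powersetCard_univ]
    constructor
    · have hcf := card_flip i T hn1
      rw [hn2, hTcard] at hcf
      omega
    · intro hg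
      have := hg (Nat.find (exD T hT)) hn1
      rw [pval_flip_le i T hn1 le_rfl, hn2] at this
      omega
  · intro S hS
    obtain ⟨hn1, hn2, hn3⟩ := first_hit_up i u S hiu (exU S hS)
    have key : ∀ (h' : ∃ m, m ≤ B + D ∧
        pval i (flip S (Nat.find (exU S hS))) m ≤ 2 * i - u), Nat.find h' = Nat.find (exU S hS) := by
      intro h'
      rw [Nat.find_eq_iff]
      refine ⟨⟨hn1, ?_⟩, ?_⟩
      · rw [pval_flip_le i S hn1 le_rfl, hn2]
      · intro m hm hP
        obtain ⟨hm1, hm2⟩ := hP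
        rw [pval_flip_le i S hn1 (le_of_lt hm)] at hm2
        have := hn3 m hm
        omega
    beta_reduce
    rw [key _, flip_flip]
  · intro T hT
    obtain ⟨hn1, hn2, hn3⟩ := first_hit_down i (2 * i - u) T (by omega) (exD T hT)
    have key : ∀ (h' : ∃ m, m ≤ B + D ∧
        u ≤ pval i (flip T (Nat.find (exD T hT))) m), Nat.find h' = Nat.find (exD T hT) := by
      intro h'
      rw [Nat.find_eq_iff]
      refine ⟨⟨hn1, ?_⟩, ?_⟩
      · rw [pval_flip_le i T hn1 le_rfl, hn2]
        omega
      · intro m hm hP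
        obtain ⟨hm1, hm2⟩ := hP
        rw [pval_flip_le i T hn1 (le_of_lt hm)] at hm2
        have := hn3 m hm
        omega
    beta_reduce
    rw [key _, flip_flip]

theorem bounded_bridge_count_case3' (i j l u : ℤ) (B D : ℕ) (hj : j = i + B - D)
    (hiu : i < u) (hju : j < u) (hl : l + D < i) (hu : u - B ≤ i) :
    (BoundedBridges i j l u B D).ncard
      = Nat.choose (B + D) B - Nat.choose (B + D) (((B : ℤ) - j + u).toNat) := by
  classical
  set c : ℕ := B - (u - i).toNat with hc
  have hdB : (u - i).toNat ≤ B := by omega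
  have hcz : (c : ℤ) = (B : ℤ) + i - u := by rw [hc]; omega
  set A := (Finset.powersetCard B (Finset.univ : Finset (Fin (B + D)))).filter
    (fun S => ∀ m ≤ B + D, pval i S m < u) with hA
  have h_set : BoundedBridges i j l u B D = ↑(A.image (toFun i B D)) := by
    ext ω
    simp only [BoundedBridges, Set.mem_setOf_eq, Finset.coe_image, Set.mem_image,
      Finset.mem_coe]
    constructor
    · rintro ⟨hb, hbd⟩
      refine ⟨upSet B D ω, ?_, (toFun_eq_of_bridge i j B D hb).symm⟩
      rw [hA, Finset.mem_filter, Finset.mem_powersetCard_univ]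
      refine ⟨card_upSet i j B D hb, ?_⟩
      intro m hm
      rw [← bridge_eq_pval i j B D hb m hm]
      exact (hbd ⟨m, by omega⟩).2
    · rintro ⟨S, hS, rfl⟩
      rw [hA, Finset.mem_filter, Finset.mem_powersetCard_univ] at hS
      obtain ⟨hcard, hgood⟩ := hS
      refine ⟨isBridge_toFun i j B D hj S hcard, ?_⟩
      intro k
      constructor
      · have h1 := le_fcnt_add S k.val (by omega)
        rw [hcard] at h1
        show l < pval i S k.val
        unfold pval
        have h2 : B + D - B = D := by omega
        rw [h2] at h1
        push_cast
        omega
      · exact hgood k.val (by omega)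
  rw [h_set, Set.ncard_coe_finset,
    Finset.card_image_of_injective _ (toFun_injective i B D)]
  have hsum := Finset.card_filter_add_card_filter_not
    (s := Finset.powersetCard B (Finset.univ : Finset (Fin (B + D))))
    (fun S => ∀ m ≤ B + D, pval i S m < u)
  rw [Finset.card_powersetCard, Finset.card_univ, Fintype.card_fin] at hsum
  have hbad := card_bad i u B D c hiu hcz (by omega)
  rw [Finset.card_powersetCard, Finset.card_univ, Fintype.card_fin] at hbad
  have htoNat : ((B : ℤ) - j + u).toNat = (B + D) - c := by omega
  rw [htoNat]
  have hsymm : (B + D).choose ((B + D) - c) = (B + D).choose c :=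
    Nat.choose_symm (by omega)
  rw [hsymm]
  rw [hbad] at hsum
  rw [← hA] at hsum
  omega

end BridgeCount

/-- Theorem 1, case 3: if `i < u`, `j < u`, `i > l + D` and `i ≥ u - B` (upper bound
reachable, lower bound not), then `card 𝕊_{ij}^B(l,u) = C(K, B) - C(K, B_u)` with
`B_u = B - j + u`. -/
theorem bounded_bridge_count_case3 (i j l u : ℤ) (B D : ℕ) (hj : j = i + B - D)
    (hiu : i < u) (hju : j < u) (hl : l + D < i) (hu : u - B ≤ i) :
    (BoundedBridges i j l u B D).ncard
      = Nat.choose (B + D) B - Nat.choose (B + D) (((B : ℤ) - j + u).toNat) :=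
  BridgeCount.bounded_bridge_count_case3' i j l u B D hj hiu hju hl hu
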